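/- For any positive integers q ≥ 3 and l₁,…,l_q, the quantity (x^{l₁}∂^{l₁} − (γL)^{l₁})⋯(x^{l_q}∂^{l_q} − (γL)^{l_q}) exp(γL(x−1))|_{x=1} is O(L^{l₁+⋯+l_q − 2}) as L → ∞; for q = 2 it is O(L^{l₁+l₂−1}). -/

import Mathlib

open Filter

/-- The operator `x^l ∂^l − c^l` acting on smooth functions of one real variable. -/
noncomputable def factOp (l : ℕ) (c : ℝ) (f : ℝ → ℝ) : ℝ → ℝ :=
  fun x => x ^ l * (deriv^[l] f) x - c ^ l * f x

/-- The composition `(x^{l₁}∂^{l₁} − c^{l₁})⋯(x^{l_q}∂^{l_q} − c^{l_q})` for the list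
of exponents `ls = [l₁, …, l_q]`. -/
noncomputable def factProd (c : ℝ) : List ℕ → (ℝ → ℝ) → (ℝ → ℝ)
  | [], f => f
  | l :: ls, f => factOp l c (factProd c ls f)

namespace S14
open Polynomial Filter

abbrev PP := Polynomial (Polynomial ℝ)

noncomputable def DD (P : PP) : PP := derivative P + C X * P

noncomputable def OpP (l : ℕ) (P : PP) : PP := (X + 1) ^ l * DD^[l] P - C (X ^ l) * P

noncomputable def GG (l : ℕ) (P : PP) : PP := DD^[l] P - C (X ^ l) * P

lemma GG_zero (P : PP) : GG 0 P = 0 := by simp [GG]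

lemma DD_zero : DD 0 = 0 := by simp [DD]

lemma GG_succ (l : ℕ) (P : PP) :
    GG (l + 1) P = DD (GG l P) + C (X ^ l) * derivative P := by
  simp only [GG, DD, Function.iterate_succ_apply', derivative_sub, derivative_C_mul,
    pow_succ, C_mul]
  ring

lemma GG_one (P : PP) : GG 1 P = derivative P := by
  rw [GG_succ, GG_zero, DD_zero]; simp

lemma OpP_eq (l : ℕ) (P : PP) :
    OpP l P = (X + 1) ^ l * GG l P + ((X + 1) ^ l - 1) * (C (X ^ l) * P) := by
  simp only [OpP, GG]; ring

lemma DD_coeff (P : PP) (b : ℕ) :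
    (DD P).coeff b = P.coeff (b + 1) * ((b : ℝ[X]) + 1) + X * P.coeff b := by
  simp [DD, coeff_derivative, coeff_C_mul]

lemma DD_iter_one (l : ℕ) : DD^[l] (1 : PP) = C (X ^ l) := by
  induction l with
  | zero => simp
  | succ l ih =>
    rw [Function.iterate_succ_apply', ih]
    rw [DD, derivative_C, ← C_mul, ← pow_succ', zero_add]


/-! ### Degree bounds -/

lemma natle {m n : ℕ} (h : m ≤ n) : (m : WithBot ℕ) ≤ (n : WithBot ℕ) := by exact_mod_cast h

lemma deg_le_mono {p : ℝ[X]} {m n : ℕ} (h : p.degree ≤ (m : WithBot ℕ)) (hmn : m ≤ n) :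
    p.degree ≤ (n : WithBot ℕ) := h.trans (natle hmn)

lemma deg_natmul {p : ℝ[X]} {m : ℕ} (h : p.degree ≤ (m : WithBot ℕ)) (k : ℕ) :
    (p * ((k : ℝ[X]) + 1)).degree ≤ (m : WithBot ℕ) := by
  refine (degree_mul_le _ _).trans ?_
  have h2 : (((k : ℝ[X]) + 1)).degree ≤ 0 := by
    refine (degree_add_le _ _).trans (max_le (degree_natCast_le k) degree_one_le)
  calc p.degree + ((k : ℝ[X]) + 1).degree ≤ (m : WithBot ℕ) + 0 := add_le_add h h2
    _ = (m : WithBot ℕ) := add_zero _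

lemma deg_Xpow_mul {p : ℝ[X]} {m : ℕ} (h : p.degree ≤ (m : WithBot ℕ)) (k : ℕ) :
    (X ^ k * p).degree ≤ ((k + m : ℕ) : WithBot ℕ) := by
  refine (degree_mul_le _ _).trans ?_
  calc (X ^ k : ℝ[X]).degree + p.degree ≤ (k : WithBot ℕ) + (m : WithBot ℕ) :=
        add_le_add (degree_X_pow_le k) h
    _ = ((k + m : ℕ) : WithBot ℕ) := by push_cast; rfl

lemma deg_X_mul {p : ℝ[X]} {m : ℕ} (h : p.degree ≤ (m : WithBot ℕ)) :
    (X * p).degree ≤ ((m + 1 : ℕ) : WithBot ℕ) := by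
  have := deg_Xpow_mul h 1
  simpa [pow_one, Nat.add_comm] using this

/-- Coefficient-wise degree bound for `DD`. -/
lemma DD_coeff_bound {P : PP} {f : ℕ → ℕ} (hP : ∀ b, (P.coeff b).degree ≤ (f b : WithBot ℕ))
    (b : ℕ) : ((DD P).coeff b).degree ≤ ((max (f (b+1)) (f b + 1) : ℕ) : WithBot ℕ) := by
  rw [DD_coeff]
  refine (degree_add_le _ _).trans (max_le ?_ ?_)
  · exact deg_le_mono (deg_natmul (hP (b+1)) b) (le_max_left _ _)
  · exact deg_le_mono (deg_X_mul (hP b)) (le_max_right _ _)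

/-- Absolute coefficient degree bound for `GG`. -/
lemma Ab_GG {P : PP} {n : ℕ} (hP : ∀ b, (P.coeff b).degree ≤ (n : WithBot ℕ)) :
    ∀ l, ∀ b, ((GG (l + 1) P).coeff b).degree ≤ ((n + l : ℕ) : WithBot ℕ) := by
  have hder : ∀ b, ((derivative P).coeff b).degree ≤ (n : WithBot ℕ) := by
    intro b; rw [coeff_derivative]
    exact_mod_cast deg_natmul (hP (b+1)) b
  intro l
  induction l with
  | zero => rw [GG_one]; simpa using fun b => hder b
  | succ l ih =>
    intro b
    rw [GG_succ, coeff_add]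
    refine (degree_add_le _ _).trans (max_le ?_ ?_)
    · have := DD_coeff_bound (f := fun _ => n + l) ih b
      exact deg_le_mono this (by omega)
    · rw [coeff_C_mul]
      exact deg_le_mono (deg_Xpow_mul (hder b) (l+1)) (by omega)

/-- Weighted coefficient degree bound for `GG`: only uses bounds on `P.coeff (b+1)`. -/
lemma Wb_GG {P : PP} {m : ℕ} (hP : ∀ b, (P.coeff (b + 1)).degree ≤ ((m + b : ℕ) : WithBot ℕ)) :
    ∀ l, ∀ b, ((GG (l + 1) P).coeff b).degree ≤ ((m + l + b : ℕ) : WithBot ℕ) := by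
  have hder : ∀ b, ((derivative P).coeff b).degree ≤ ((m + b : ℕ) : WithBot ℕ) := by
    intro b; rw [coeff_derivative]
    exact deg_natmul (hP b) b
  intro l
  induction l with
  | zero => rw [GG_one]; simpa using fun b => hder b
  | succ l ih =>
    intro b
    rw [GG_succ, coeff_add]
    refine (degree_add_le _ _).trans (max_le ?_ ?_)
    · have := DD_coeff_bound (f := fun b => m + l + b) ih b
      exact deg_le_mono this (by omega)
    · rw [coeff_C_mul]
      exact deg_le_mono (deg_Xpow_mul (hder b) (l+1)) (by omega)

/-- Multiplication by a polynomial with constant (degree ≤ 0) coefficients. -/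
lemma mul_deg_le {A R : PP} (hA : ∀ i, (A.coeff i).degree ≤ (0 : WithBot ℕ))
    {f : ℕ → WithBot ℕ} (hf : Monotone f) (hR : ∀ j, (R.coeff j).degree ≤ f j) (b : ℕ) :
    ((A * R).coeff b).degree ≤ f b := by
  rw [coeff_mul]
  refine (degree_sum_le _ _).trans (Finset.sup_le fun x hx => ?_)
  have hx2 : x.2 ≤ b := by
    have := Finset.HasAntidiagonal.mem_antidiagonal.mp hx; omega
  refine (degree_mul_le _ _).trans ?_
  calc (A.coeff x.1).degree + (R.coeff x.2).degree ≤ 0 + f x.2 :=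
        add_le_add (hA x.1) (hR x.2)
    _ = f x.2 := zero_add _
    _ ≤ f b := hf hx2

lemma mul_coeff_zero_eq {A R : PP} (hA0 : A.coeff 0 = 0) : (A * R).coeff 0 = 0 := by
  rw [mul_coeff_zero, hA0, zero_mul]

/-- Variant when the constant coefficient of `A` vanishes. -/
lemma mul_deg_le' {A R : PP} (hA : ∀ i, (A.coeff i).degree ≤ (0 : WithBot ℕ))
    (hA0 : A.coeff 0 = 0)
    {f : ℕ → WithBot ℕ} (hf : Monotone f) (hR : ∀ j, (R.coeff j).degree ≤ f j) (b : ℕ) :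
    ((A * R).coeff (b + 1)).degree ≤ f b := by
  rw [coeff_mul]
  refine (degree_sum_le _ _).trans (Finset.sup_le fun x hx => ?_)
  have hxs := Finset.HasAntidiagonal.mem_antidiagonal.mp hx
  rcases Nat.eq_zero_or_pos x.1 with h1 | h1
  · have : x.1 = 0 := h1
    rw [this, hA0, zero_mul]
    simp
  · have hx2 : x.2 ≤ b := by omega
    refine (degree_mul_le _ _).trans ?_
    calc (A.coeff x.1).degree + (R.coeff x.2).degree ≤ 0 + f x.2 :=
          add_le_add (hA x.1) (hR x.2)
      _ = f x.2 := zero_add _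
      _ ≤ f b := hf hx2

lemma Cst_X1pow (l : ℕ) : ∀ i, (((X + 1 : PP) ^ l).coeff i).degree ≤ (0 : WithBot ℕ) := by
  intro i
  rw [coeff_X_add_one_pow]
  exact degree_natCast_le _

lemma Cst_X1pow_sub_one (l : ℕ) :
    ∀ i, (((X + 1 : PP) ^ l - 1).coeff i).degree ≤ (0 : WithBot ℕ) := by
  intro i
  rw [coeff_sub]
  refine (degree_sub_le _ _).trans (max_le (Cst_X1pow l i) ?_)
  rw [coeff_one]
  split <;> simp

lemma coeff0_X1pow_sub_one (l : ℕ) : ((X + 1 : PP) ^ l - 1).coeff 0 = 0 := by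
  rw [coeff_sub, coeff_X_add_one_pow, coeff_one]
  simp

/-! ### The invariant chain -/

noncomputable def Plist : List ℕ → PP
  | [] => 1
  | l :: ls => OpP l (Plist ls)

lemma base1 (l : ℕ) :
    (Plist [l]).coeff 0 = 0 ∧ ∀ b, ((Plist [l]).coeff b).degree ≤ (l : WithBot ℕ) := by
  have hP : Plist [l] = ((X + 1) ^ l - 1) * C (X ^ l) := by
    show OpP l (Plist []) = _
    show OpP l 1 = _
    rw [OpP, DD_iter_one]
    ring
  constructor
  · rw [hP, mul_coeff_zero_eq (coeff0_X1pow_sub_one l)]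
  · intro b
    rw [hP, coeff_mul_C]
    have h0 : ((X ^ l : ℝ[X])).degree ≤ (l : WithBot ℕ) := degree_X_pow_le l
    refine (degree_mul_le _ _).trans ?_
    calc _ ≤ (0 : WithBot ℕ) + (l : WithBot ℕ) := add_le_add (Cst_X1pow_sub_one l b) h0
      _ = (l : WithBot ℕ) := zero_add _

/-- Step from one factor to two: from `coeff 0 = 0` and absolute bound `s₁`. -/
lemma step12 {P : PP} {s₁ : ℕ} (l : ℕ) (hl : 1 ≤ l)
    (h0 : P.coeff 0 = 0) (hA : ∀ b, (P.coeff b).degree ≤ (s₁ : WithBot ℕ)) :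
    ((OpP l P).coeff 0).degree ≤ ((s₁ + l - 1 : ℕ) : WithBot ℕ) ∧
      ∀ b, ((OpP l P).coeff (b + 1)).degree ≤ ((s₁ + l - 1 + b : ℕ) : WithBot ℕ) := by
  obtain ⟨l', rfl⟩ : ∃ l', l = l' + 1 := ⟨l - 1, by omega⟩
  set l := l' + 1 with hldef
  -- bounds for the part (X+1)^l * GG l P : all coefficients have degree ≤ s₁ + l - 1
  have hGpart : ∀ b, (((X + 1 : PP) ^ l * GG l P).coeff b).degree
      ≤ ((s₁ + l' : ℕ) : WithBot ℕ) := by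
    intro b
    exact mul_deg_le (Cst_X1pow l) (f := fun _ => ((s₁ + l' : ℕ) : WithBot ℕ))
      monotone_const (Ab_GG hA l') b
  -- bounds for the part ((X+1)^l - 1) * (C (X^l) * P)
  have hR : ∀ j, ((C (X ^ l) * P : PP).coeff j).degree
      ≤ if j = 0 then (⊥ : WithBot ℕ) else ((s₁ + l : ℕ) : WithBot ℕ) := by
    intro j
    rw [coeff_C_mul]
    rcases Nat.eq_zero_or_pos j with hj | hj
    · simp [hj, h0]
    · simp only [Nat.pos_iff_ne_zero.mp hj, if_false]
      exact deg_le_mono (deg_Xpow_mul (hA j) l) (by omega)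
  have hfmono : Monotone (fun j => if j = 0 then (⊥ : WithBot ℕ)
      else ((s₁ + l : ℕ) : WithBot ℕ)) := by
    intro a b hab
    by_cases ha : a = 0 <;> by_cases hb : b = 0 <;> simp_all <;> omega
  have hBpart0 : (((X + 1 : PP) ^ l - 1) * (C (X ^ l) * P)).coeff 0 = 0 :=
    mul_coeff_zero_eq (coeff0_X1pow_sub_one l)
  have hBpart : ∀ b, ((((X + 1 : PP) ^ l - 1) * (C (X ^ l) * P)).coeff (b + 1)).degree
      ≤ ((s₁ + l - 1 + b : ℕ) : WithBot ℕ) := by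
    intro b
    refine (mul_deg_le' (f := fun j => if j = 0 then (⊥ : WithBot ℕ)
      else ((s₁ + l : ℕ) : WithBot ℕ)) (Cst_X1pow_sub_one l) (coeff0_X1pow_sub_one l)
      hfmono hR b).trans ?_
    by_cases hb : b = 0
    · simp [hb]
    · simp only [hb, if_false]
      exact natle (by omega)
  constructor
  · rw [OpP_eq, coeff_add, hBpart0, add_zero]
    exact deg_le_mono (hGpart 0) (by omega)
  · intro b
    rw [OpP_eq, coeff_add]
    refine (degree_add_le _ _).trans (max_le ?_ (hBpart b))
    exact deg_le_mono (hGpart (b + 1)) (by omega)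

/-- Step from invariant `Inv2`-shape to `Inv3`-shape. -/
lemma step23 {P : PP} {s : ℕ} (l : ℕ) (hl : 1 ≤ l) (hs : 1 ≤ s)
    (h0 : (P.coeff 0).degree ≤ ((s - 1 : ℕ) : WithBot ℕ))
    (h1 : ∀ b, (P.coeff (b + 1)).degree ≤ ((s - 1 + b : ℕ) : WithBot ℕ)) :
    ∀ b, ((OpP l P).coeff b).degree ≤ ((s + l - 2 + b : ℕ) : WithBot ℕ) := by
  obtain ⟨l', rfl⟩ : ∃ l', l = l' + 1 := ⟨l - 1, by omega⟩
  set l := l' + 1 with hldef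
  have hGG := Wb_GG h1 l'
  have hGpart : ∀ b, (((X + 1 : PP) ^ l * GG l P).coeff b).degree
      ≤ ((s - 1 + l' + b : ℕ) : WithBot ℕ) := by
    intro b
    refine mul_deg_le (Cst_X1pow l) (f := fun b => ((s - 1 + l' + b : ℕ) : WithBot ℕ))
      ?_ (fun j => hGG j) b
    intro a b hab; exact natle (by omega)
  have hR : ∀ j, ((C (X ^ l) * P : PP).coeff j).degree
      ≤ ((max (s + l - 1) (s + l - 2 + j) : ℕ) : WithBot ℕ) := by
    intro j
    rw [coeff_C_mul]
    rcases Nat.eq_zero_or_pos j with hj | hj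
    · subst hj
      exact deg_le_mono (deg_Xpow_mul h0 l) (by omega)
    · obtain ⟨j', rfl⟩ : ∃ j', j = j' + 1 := ⟨j - 1, by omega⟩
      exact deg_le_mono (deg_Xpow_mul (h1 j') l) (by omega)
  have hfmono : Monotone (fun j => ((max (s + l - 1) (s + l - 2 + j) : ℕ) : WithBot ℕ)) := by
    intro a b hab; exact natle (by omega)
  intro b
  rw [OpP_eq, coeff_add]
  refine (degree_add_le _ _).trans (max_le ?_ ?_)
  · exact deg_le_mono (hGpart b) (by omega)
  · rcases Nat.eq_zero_or_pos b with hb | hb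
    · subst hb
      rw [mul_coeff_zero_eq (coeff0_X1pow_sub_one l)]
      simp
    · obtain ⟨b', rfl⟩ : ∃ b', b = b' + 1 := ⟨b - 1, by omega⟩
      refine (mul_deg_le' (f := fun j => ((max (s + l - 1) (s + l - 2 + j) : ℕ) : WithBot ℕ))
        (Cst_X1pow_sub_one l) (coeff0_X1pow_sub_one l) hfmono hR b').trans ?_
      exact natle (by omega)

lemma length_le_sum {ls : List ℕ} (h : ∀ l ∈ ls, 1 ≤ l) : ls.length ≤ ls.sum := by
  induction ls with
  | nil => simp
  | cons l ls ih =>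
    simp only [List.length_cons, List.sum_cons]
    have := h l (by simp)
    have := ih (fun x hx => h x (by simp [hx]))
    omega

lemma chain (ls : List ℕ) (h : ∀ l ∈ ls, 1 ≤ l) :
    (ls.length = 1 → (Plist ls).coeff 0 = 0 ∧
        ∀ b, ((Plist ls).coeff b).degree ≤ ((ls.sum : ℕ) : WithBot ℕ)) ∧
    (ls.length = 2 → ((Plist ls).coeff 0).degree ≤ ((ls.sum - 1 : ℕ) : WithBot ℕ) ∧
        ∀ b, ((Plist ls).coeff (b + 1)).degree ≤ ((ls.sum - 1 + b : ℕ) : WithBot ℕ)) ∧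
    (3 ≤ ls.length →
        ∀ b, ((Plist ls).coeff b).degree ≤ ((ls.sum - 2 + b : ℕ) : WithBot ℕ)) := by
  induction ls with
  | nil => refine ⟨by simp, by simp, by simp⟩
  | cons l ls ih =>
    have hl : 1 ≤ l := h l (by simp)
    have hls : ∀ x ∈ ls, 1 ≤ x := fun x hx => h x (by simp [hx])
    have hlen := length_le_sum hls
    obtain ⟨ih1, ih2, ih3⟩ := ih hls
    have hsum : (l :: ls).sum = l + ls.sum := by simp
    refine ⟨?_, ?_, ?_⟩
    · intro hlen1
      have : ls = [] := by
        cases ls with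
        | nil => rfl
        | cons a as => simp at hlen1
      subst this
      simpa using base1 l
    · intro hlen2
      have h1 : ls.length = 1 := by simpa using hlen2
      obtain ⟨h0, hA⟩ := ih1 h1
      have hs1 : 1 ≤ ls.sum := by omega
      have := step12 l hl h0 hA
      constructor
      · exact deg_le_mono this.1 (by omega)
      · intro b
        exact deg_le_mono (this.2 b) (by omega)
    · intro hlen3
      have hlen3' : 2 ≤ ls.length := by simpa using hlen3
      rcases Nat.lt_or_ge ls.length 3 with hcase | hcase
      · have h2 : ls.length = 2 := by omega
        obtain ⟨h0, h1⟩ := ih2 h2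
        have hs : 1 ≤ ls.sum := by omega
        intro b
        exact deg_le_mono (step23 l hl hs h0 h1 b) (by omega)
      · have h3 := ih3 hcase
        have hs : 1 ≤ ls.sum := by omega
        have h0 : ((Plist ls).coeff 0).degree ≤ ((ls.sum - 1 : ℕ) : WithBot ℕ) :=
          deg_le_mono (h3 0) (by omega)
        have h1 : ∀ b, ((Plist ls).coeff (b + 1)).degree
            ≤ ((ls.sum - 1 + b : ℕ) : WithBot ℕ) := by
          intro b
          exact deg_le_mono (h3 (b + 1)) (by omega)
        intro b
        exact deg_le_mono (step23 l hl hs h0 h1 b) (by omega)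

/-! ### Analytic realization -/

noncomputable def Freal (P : PP) (c : ℝ) : ℝ → ℝ := fun x =>
  ((P.map (evalRingHom c)).eval (x - 1)) * Real.exp (c * (x - 1))

lemma Freal_hasDerivAt (P : PP) (c x : ℝ) :
    HasDerivAt (Freal P c) (Freal (DD P) c x) x := by
  have h1 : HasDerivAt (fun y : ℝ => (P.map (evalRingHom c)).eval (y - 1))
      ((derivative (P.map (evalRingHom c))).eval (x - 1)) x := by
    have := (Polynomial.hasDerivAt (P.map (evalRingHom c)) (x - 1)).comp x
      ((hasDerivAt_id x).sub_const 1)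
    simpa [Function.comp_def] using this
  have h2 : HasDerivAt (fun y : ℝ => Real.exp (c * (y - 1)))
      (Real.exp (c * (x - 1)) * c) x := by
    have hi : HasDerivAt (fun y : ℝ => c * (y - 1)) c x := by
      simpa using ((hasDerivAt_id x).sub_const 1).const_mul c
    exact (Real.hasDerivAt_exp (c * (x - 1))).comp x hi
  have h3 := h1.mul h2
  convert h3 using 1
  show ((DD P).map (evalRingHom c)).eval (x - 1) * Real.exp (c * (x - 1)) = _
  rw [DD]
  simp only [Polynomial.map_add, Polynomial.map_mul, map_C, derivative_map,
    eval_add, eval_mul, eval_C, coe_evalRingHom, eval_X]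
  ring
  all_goals rfl

lemma deriv_Freal (P : PP) (c : ℝ) : deriv (Freal P c) = Freal (DD P) c :=
  funext fun x => (Freal_hasDerivAt P c x).deriv

lemma iter_deriv_Freal (P : PP) (c : ℝ) (l : ℕ) :
    deriv^[l] (Freal P c) = Freal (DD^[l] P) c := by
  induction l generalizing P with
  | zero => rfl
  | succ l ih =>
    rw [Function.iterate_succ_apply, deriv_Freal, ih, Function.iterate_succ_apply]

lemma Freal_factOp (l : ℕ) (c : ℝ) (P : PP) :
    factOp l c (Freal P c) = Freal (OpP l P) c := by
  funext x
  show x ^ l * (deriv^[l] (Freal P c)) x - c ^ l * Freal P c x = _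
  rw [iter_deriv_Freal]
  simp only [Freal, OpP, Polynomial.map_sub, Polynomial.map_mul, Polynomial.map_pow,
    Polynomial.map_add, Polynomial.map_one, Polynomial.map_X, map_C,
    eval_sub, eval_mul, eval_pow, eval_add, eval_X, eval_one, eval_C,
    coe_evalRingHom]
  have hx : x - 1 + 1 = x := by ring
  rw [hx]
  ring

lemma Freal_prod (c : ℝ) : ∀ ls : List ℕ,
    factProd c ls (fun x => Real.exp (c * (x - 1))) = Freal (Plist ls) c
  | [] => by
    funext x
    simp [factProd, Freal, Plist]
  | l :: ls => by
    show factOp l c (factProd c ls _) = _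
    rw [Freal_prod c ls, Freal_factOp]
    rfl

lemma Freal_one_point (P : PP) (c : ℝ) : Freal P c 1 = (P.coeff 0).eval c := by
  simp [Freal, ← coeff_zero_eq_eval_zero, coeff_map, coe_evalRingHom]

end S14


/-- For positive integers `l₁, …, l_q` and fixed `γ > 0`, the quantity
`(x^{l₁}∂^{l₁} − (γL)^{l₁})⋯(x^{l_q}∂^{l_q} − (γL)^{l_q}) e^{γL(x−1)}|_{x=1}`
is `O(L^{l₁+⋯+l_q − 2})` as `L → ∞` when `q ≥ 3`, and `O(L^{l₁+l₂−1})` when `q = 2`. -/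
theorem statement14 (γ : ℝ) (hγ : 0 < γ) (ls : List ℕ) (hls : ∀ l ∈ ls, 1 ≤ l) :
    (ls.length = 2 →
      (fun L : ℝ => factProd (γ * L) ls (fun x => Real.exp (γ * L * (x - 1))) 1)
        =O[atTop] fun L : ℝ => L ^ (ls.sum - 1)) ∧
    (3 ≤ ls.length →
      (fun L : ℝ => factProd (γ * L) ls (fun x => Real.exp (γ * L * (x - 1))) 1)
        =O[atTop] fun L : ℝ => L ^ (ls.sum - 2)) := by
  have key : ∀ d : ℕ, ((S14.Plist ls).coeff 0).degree ≤ (d : WithBot ℕ) →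
      (fun L : ℝ => factProd (γ * L) ls (fun x => Real.exp (γ * L * (x - 1))) 1)
        =O[atTop] fun L : ℝ => L ^ d := by
    intro d hd
    have heq : (fun L : ℝ => factProd (γ * L) ls (fun x => Real.exp (γ * L * (x - 1))) 1)
        = fun L : ℝ =>
          (((S14.Plist ls).coeff 0).comp (Polynomial.C γ * Polynomial.X)).eval L := by
      funext L
      rw [S14.Freal_prod, S14.Freal_one_point, Polynomial.eval_comp]
      simp
    have h1 : (Polynomial.C γ * Polynomial.X : Polynomial ℝ).natDegree ≤ 1 :=
      le_of_eq (Polynomial.natDegree_C_mul_X γ hγ.ne')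
    have hdeg : (((S14.Plist ls).coeff 0).comp (Polynomial.C γ * Polynomial.X)).degree
        ≤ ((Polynomial.X : Polynomial ℝ) ^ d).degree := by
      rw [Polynomial.degree_X_pow]
      apply Polynomial.degree_le_of_natDegree_le
      refine le_trans Polynomial.natDegree_comp_le ?_
      calc ((S14.Plist ls).coeff 0).natDegree * (Polynomial.C γ * Polynomial.X).natDegree
          ≤ ((S14.Plist ls).coeff 0).natDegree * 1 := Nat.mul_le_mul_left _ h1
        _ = ((S14.Plist ls).coeff 0).natDegree := mul_one _
        _ ≤ d := Polynomial.natDegree_le_of_degree_le hd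
    have hO := Polynomial.isBigO_of_degree_le _ _ hdeg
    have hfun : (fun x : ℝ => Polynomial.eval x ((Polynomial.X : Polynomial ℝ) ^ d))
        = fun x : ℝ => x ^ d := by
      funext x; simp
    rw [heq]
    rw [hfun] at hO
    exact hO
  obtain ⟨c1, c2, c3⟩ := S14.chain ls hls
  constructor
  · intro h2
    exact key _ (c2 h2).1
  · intro h3
    refine key _ (S14.deg_le_mono ((c3 h3) 0) (by omega))
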